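/- For every real k with 1 < k < 4/3, every natural number n ≥ 1, and every real P with 1/n ≤ P ≤ 1, it holds that (3/4)^{log_k √n − log_k(1/√P) − 1} · ((k/(k−1) + π/4)·√n + 1) ≤ (4k/(3(k−1)) + π/3)·(1/√P) + 4/3. -/

import Mathlib

theorem final_grover_step_bound (k : ℝ) (hk1 : 1 < k) (hk2 : k < 4/3)
    (n : ℕ) (hn : 1 ≤ n) (P : ℝ) (hP1 : 1 / (n : ℝ) ≤ P) (hP2 : P ≤ 1) :
    (3/4 : ℝ) ^ (Real.log (Real.sqrt n) / Real.log k -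
        Real.log (1 / Real.sqrt P) / Real.log k - 1) *
      ((k / (k - 1) + Real.pi / 4) * Real.sqrt n + 1) ≤
      (4 * k / (3 * (k - 1)) + Real.pi / 3) * (1 / Real.sqrt P) + 4/3 := by
  have hlogk : 0 < Real.log k := Real.log_pos hk1
  have hn0 : (0:ℝ) < n := by exact_mod_cast hn
  have hP0 : (0:ℝ) < P := lt_of_lt_of_le (by positivity) hP1
  set a := Real.sqrt n with ha
  set b := Real.sqrt P with hb
  have ha0 : 0 < a := Real.sqrt_pos.mpr hn0
  have hb0 : 0 < b := Real.sqrt_pos.mpr hP0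
  have ha1 : 1 ≤ a := by
    rw [ha, show (1:ℝ) = Real.sqrt 1 by simp]
    exact Real.sqrt_le_sqrt (by exact_mod_cast hn)
  have hb1 : b ≤ 1 := by
    rw [hb, show (1:ℝ) = Real.sqrt 1 by simp]
    exact Real.sqrt_le_sqrt hP2
  have hab : 1 ≤ a * b := by
    have h1 : Real.sqrt (1 / (n:ℝ)) ≤ b := Real.sqrt_le_sqrt hP1
    have h2 : Real.sqrt (1 / (n:ℝ)) = 1 / a := by
      rw [one_div, one_div, Real.sqrt_inv]
    rw [h2, div_le_iff₀ ha0] at h1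
    linarith [h1]
  have hlog1b : Real.log (1 / b) = - Real.log b := by
    rw [one_div, Real.log_inv]
  have hexp : Real.log a / Real.log k - Real.log (1 / b) / Real.log k - 1
      = Real.log (a * b) / Real.log k - 1 := by
    rw [hlog1b, Real.log_mul (ne_of_gt ha0) (ne_of_gt hb0)]
    ring
  rw [hexp]
  set s := Real.log (a * b) / Real.log k with hs
  have key : (3/4 : ℝ) ^ s ≤ (a * b)⁻¹ := by
    rw [Real.rpow_def_of_pos (by norm_num : (0:ℝ) < 3/4),
      ← Real.exp_log (show (0:ℝ) < (a*b)⁻¹ by positivity)]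
    apply Real.exp_le_exp.mpr
    rw [Real.log_inv]
    have hL : 0 ≤ Real.log (a * b) := Real.log_nonneg hab
    have h34 : Real.log (3/4 : ℝ) = - Real.log (4/3 : ℝ) := by
      rw [← Real.log_inv]; norm_num
    have hk43 : Real.log k ≤ Real.log (4/3 : ℝ) :=
      Real.log_le_log (by linarith) (le_of_lt hk2)
    rw [hs, h34, neg_mul, neg_le_neg_iff, ← mul_div_assoc, le_div_iff₀ hlogk]
    nlinarith [mul_le_mul_of_nonneg_left hk43 hL]
  have hsplit : (3/4 : ℝ) ^ (s - 1) = (4/3) * (3/4 : ℝ) ^ s := by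
    rw [Real.rpow_sub (by norm_num : (0:ℝ) < 3/4), Real.rpow_one]
    ring
  rw [hsplit]
  have hC : 0 < k / (k - 1) + Real.pi / 4 := by
    have : 0 < k / (k - 1) := div_pos (by linarith) (by linarith)
    linarith [Real.pi_pos]
  have hkne : k - 1 ≠ 0 := by intro h; linarith [hk1]
  have step1 : (4/3 : ℝ) * (3/4 : ℝ) ^ s * ((k / (k - 1) + Real.pi / 4) * a + 1)
      ≤ (4/3) * (a * b)⁻¹ * ((k / (k - 1) + Real.pi / 4) * a + 1) := by
    apply mul_le_mul_of_nonneg_right _ (by nlinarith [mul_pos hC ha0])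
    linarith [key]
  refine le_trans step1 ?_
  have hinv : (a * b)⁻¹ ≤ 1 := by
    rw [inv_le_one_iff₀]; right; exact hab
  have habne : a * b ≠ 0 := by positivity
  have hD : (4 * k / (3 * (k - 1)) + Real.pi / 3) * (1 / b)
      = (4/3) * ((k / (k - 1) + Real.pi / 4) / b) := by
    field_simp
  rw [hD]
  have h1 : (4/3 : ℝ) * (a * b)⁻¹ * ((k / (k - 1) + Real.pi / 4) * a + 1)
      = (4/3) * ((k / (k - 1) + Real.pi / 4) / b) + (4/3) * (a * b)⁻¹ := by
    field_simp
  rw [h1]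
  nlinarith [hinv]
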